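/- Let E ⊆ [0,T] be a measurable set of positive Lebesgue measure and let ℓ ∈ (0,T) be a Lebesgue density point of E. Then for each a > 1 there exists ℓ₁ ∈ (ℓ, T) such that the sequence ℓ_{k+1} = ℓ + (ℓ₁ - ℓ)/a^k satisfies m(E ∩ (ℓ_{k+1}, ℓ_k)) ≥ (ℓ_k - ℓ_{k+1})/3 for all k ≥ 1. -/

import Mathlib

open MeasureTheory Filter

/-- Phung–Wang decomposition of a measurable set near a density point:
the geometric sequence `ℓ_k = ℓ + (ℓ₁ - ℓ)/a^(k-1)` captures at least a third
of the measure in each gap. -/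
theorem density_point_geometric_sequence (T ℓ : ℝ) (hT : 0 < T)
    (E : Set ℝ) (hE : MeasurableSet E) (hET : E ⊆ Set.Icc 0 T)
    (hpos : 0 < volume E) (hℓ : ℓ ∈ Set.Ioo 0 T)
    (hdens : Tendsto
      (fun r : ℝ => volume (E ∩ Set.Ioo (ℓ - r) (ℓ + r)) / ENNReal.ofReal (2 * r))
      (nhdsWithin 0 (Set.Ioi 0)) (nhds 1))
    (a : ℝ) (ha : 1 < a) :
    ∃ ℓ₁ ∈ Set.Ioo ℓ T, ∀ k : ℕ, 1 ≤ k →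
      volume (E ∩ Set.Ioo (ℓ + (ℓ₁ - ℓ) / a ^ (k : ℝ)) (ℓ + (ℓ₁ - ℓ) / a ^ ((k : ℝ) - 1))) ≥
        ENNReal.ofReal
          (((ℓ + (ℓ₁ - ℓ) / a ^ ((k : ℝ) - 1)) - (ℓ + (ℓ₁ - ℓ) / a ^ (k : ℝ))) / 3) := by
  have ha0 : (0:ℝ) < a := lt_trans one_pos ha
  set ε : ℝ := (1 - 1/a)/3 with hεdef
  have hinv : 1/a < 1 := by
    rw [div_lt_one ha0]; exact ha
  have hε : 0 < ε := by
    have : 0 < 1 - 1/a := by linarith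
    positivity
  have hε1 : ε < 1 := by
    have h1 : 1 - 1/a < 1 := by
      have : 0 < 1/a := by positivity
      linarith
    have : (1 - 1/a)/3 < 1/3 := by linarith
    linarith
  have hlt1 : ENNReal.ofReal (1 - ε) < 1 := by
    rw [ENNReal.ofReal_lt_one]; linarith
  have h1 : ∀ᶠ r in nhdsWithin (0:ℝ) (Set.Ioi 0),
      ENNReal.ofReal (1 - ε) <
        volume (E ∩ Set.Ioo (ℓ - r) (ℓ + r)) / ENNReal.ofReal (2 * r) :=
    hdens.eventually (eventually_gt_nhds hlt1)
  rw [eventually_iff, mem_nhdsGT_iff_exists_Ioo_subset] at h1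
  obtain ⟨u, hu, hsub⟩ := h1
  simp only [Set.mem_Ioi] at hu
  set r : ℝ := min u (T - ℓ) / 2 with hrdef
  have hTl : 0 < T - ℓ := by have := hℓ.2; linarith
  have hr0 : 0 < r := by
    have : 0 < min u (T - ℓ) := lt_min hu hTl
    positivity
  have hru : r < u := by
    have h2 : min u (T - ℓ) ≤ u := min_le_left _ _
    have : r ≤ u / 2 := by rw [hrdef]; linarith
    linarith
  have hrT : ℓ + r < T := by
    have h2 : min u (T - ℓ) ≤ T - ℓ := min_le_right _ _
    have : r ≤ (T - ℓ) / 2 := by rw [hrdef]; linarith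
    linarith
  refine ⟨ℓ + r, ⟨by linarith, hrT⟩, fun k hk => ?_⟩
  have hsub1 : (ℓ + r) - ℓ = r := by ring
  rw [hsub1]
  have hp1 : (1:ℝ) ≤ a ^ ((k:ℝ) - 1) := by
    apply Real.one_le_rpow ha.le
    have : (1:ℝ) ≤ (k:ℝ) := by exact_mod_cast hk
    linarith
  have hp0 : (0:ℝ) < a ^ ((k:ℝ) - 1) := lt_of_lt_of_le one_pos hp1
  set p : ℝ := a ^ ((k:ℝ) - 1) with hpdef
  have hak : a ^ (k:ℝ) = p * a := by
    rw [hpdef, ← Real.rpow_add_one (ne_of_gt ha0)]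
    ring_nf
  set rk : ℝ := r / p with hrkdef
  have hrk0 : 0 < rk := div_pos hr0 hp0
  have hrka : r / a ^ (k:ℝ) = rk / a := by
    rw [hak]; exact (div_div r p a).symm
  rw [hrka]
  have hrkle : rk < u := lt_of_le_of_lt (div_le_self hr0.le hp1) hru
  have hdens' := hsub ⟨hrk0, hrkle⟩
  simp only [Set.mem_setOf_eq] at hdens'
  -- convert the ratio bound to a measure bound
  set J : Set ℝ := Set.Ioo (ℓ - rk) (ℓ + rk) with hJdef
  set I : Set ℝ := Set.Ioo (ℓ + rk / a) (ℓ + rk) with hIdef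
  have hvolJ : volume J = ENNReal.ofReal (2 * rk) := by
    rw [hJdef, Real.volume_Ioo]; ring_nf
  have h2rk : (0:ℝ) < 2 * rk := by linarith
  have hJE : ENNReal.ofReal ((1 - ε) * (2 * rk)) ≤ volume (E ∩ J) := by
    rw [ENNReal.ofReal_mul (by linarith)]
    rw [← ENNReal.le_div_iff_mul_le (Or.inl (by simp [h2rk, hrk0])) (Or.inl ENNReal.ofReal_ne_top)]
    exact hdens'.le
  rw [Set.inter_comm E J] at hJE
  -- bound the complement
  have hdiffJ : volume (J \ E) ≤ ENNReal.ofReal (ε * (2 * rk)) := by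
    have hadd : volume (J \ E) + volume (J ∩ E) = volume J := measure_diff_add_inter J hE
    have hfin : volume (J ∩ E) ≠ ⊤ := by
      refine ne_top_of_le_ne_top ?_ (measure_mono Set.inter_subset_left)
      rw [hvolJ]; exact ENNReal.ofReal_ne_top
    have heq : volume (J \ E) = volume J - volume (J ∩ E) :=
      ENNReal.eq_sub_of_add_eq hfin hadd
    rw [heq]
    have := tsub_le_tsub hvolJ.le hJE
    refine this.trans (le_of_eq ?_)
    rw [← ENNReal.ofReal_sub _ (by nlinarith)]
    ring_nf
  have hIJ : I ⊆ J := by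
    apply Set.Ioo_subset_Ioo _ le_rfl
    have : 0 < rk / a := by positivity
    linarith
  have hdiffI : volume (I \ E) ≤ ENNReal.ofReal (ε * (2 * rk)) :=
    le_trans (measure_mono (Set.diff_subset_diff_left hIJ)) hdiffJ
  have hvolI : volume I = ENNReal.ofReal (rk - rk / a) := by
    rw [hIdef, Real.volume_Ioo]; ring_nf
  have haddI : volume (I \ E) + volume (I ∩ E) = volume I := measure_diff_add_inter I hE
  rw [Set.inter_comm]
  have key : ENNReal.ofReal (rk - rk / a) - ENNReal.ofReal (ε * (2 * rk)) ≤ volume (I ∩ E) := by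
    rw [tsub_le_iff_left]
    calc ENNReal.ofReal (rk - rk / a) = volume I := hvolI.symm
      _ = volume (I \ E) + volume (I ∩ E) := haddI.symm
      _ ≤ ENNReal.ofReal (ε * (2 * rk)) + volume (I ∩ E) := by gcongr
  refine le_trans (le_of_eq ?_) key
  rw [← ENNReal.ofReal_sub _ (by positivity)]
  congr 1
  have : (ℓ + rk) - (ℓ + rk / a) = rk - rk / a := by ring
  rw [this, hεdef]
  field_simp
  ring
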